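/- (a) For each x ≥ 0, the map J_x : H → ℝ, f ↦ ∫₀ˣ (ι f)(s) ds, is a well-defined continuous linear functional on H. (b) For each f ∈ H, the map x ↦ J_x f is continuously differentiable on ℝ≥0 with derivative x ↦ (ι f)(x). (c) The map ℝ≥0 × H → ℝ, (x, f) ↦ J_x f, is jointly continuous. -/

import Mathlib

open scoped NNReal
open Filter Topology MeasureTheory

theorem stmt1
    {H : Type*} [NormedAddCommGroup H] [InnerProductSpace ℝ H]
    [CompleteSpace H] [TopologicalSpace.SeparableSpace H]
    (ι : H →ₗ[ℝ] (ℝ≥0 → ℝ)) (hι : Function.Injective ι)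
    (hH1 : Continuous fun f : H => ι f 0)
    (S : ℝ≥0 → H →L[ℝ] H)
    (hshift : ∀ (h : ℝ≥0) (f : H) (x : ℝ≥0), ι (S h f) x = ι f (x + h))
    (hS0 : S 0 = ContinuousLinearMap.id ℝ H)
    (hSadd : ∀ a b : ℝ≥0, S (a + b) = (S a).comp (S b))
    (hScont : ∀ f : H, Continuous fun h : ℝ≥0 => S h f) :
    -- (a) J_x is a well-defined continuous linear functional
    (∀ x : ℝ≥0, ∃ J : H →L[ℝ] ℝ, ∀ f : H,
        J f = ∫ s in (0:ℝ)..(x:ℝ), ι f s.toNNReal) ∧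
    -- (b) x ↦ J_x f is C¹ on ℝ≥0 with derivative (ι f)(x)
    (∀ f : H,
      (∀ x : ℝ, 0 ≤ x →
        HasDerivWithinAt (fun y : ℝ => ∫ s in (0:ℝ)..y, ι f s.toNNReal)
          (ι f x.toNNReal) (Set.Ici 0) x) ∧
      Continuous fun x : ℝ≥0 => ι f x) ∧
    -- (c) (x, f) ↦ J_x f is jointly continuous
    Continuous (fun p : ℝ≥0 × H => ∫ s in (0:ℝ)..(p.1:ℝ), ι p.2 s.toNNReal) := by
  classical
  -- evaluation at 0 as a continuous linear functional
  set e0 : H →L[ℝ] ℝ :=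
    { toFun := fun f => ι f 0
      map_add' := by intro f g; simp
      map_smul' := by intro c f; simp
      cont := hH1 } with he0
  -- evaluation at x as a continuous linear functional
  set E : ℝ≥0 → H →L[ℝ] ℝ := fun x => e0.comp (S x) with hE
  have hEapp : ∀ (x : ℝ≥0) (f : H), E x f = ι f x := by
    intro x f
    simp only [hE, ContinuousLinearMap.comp_apply, he0]
    show ι (S x f) 0 = ι f x
    rw [hshift x f 0, zero_add]
  -- continuity of x ↦ ι f x
  have hcont : ∀ f : H, Continuous fun x : ℝ≥0 => ι f x := by
    intro f
    have h1 : Continuous fun x : ℝ≥0 => E x f :=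
      e0.continuous.comp (hScont f)
    simpa only [hEapp] using h1
  have hre : ∀ f : H, Continuous fun s : ℝ => (ι f s.toNNReal : ℝ) := fun f =>
    (hcont f).comp continuous_real_toNNReal
  have hint : ∀ (f : H) (a b : ℝ),
      IntervalIntegrable (fun s : ℝ => (ι f s.toNNReal : ℝ)) volume a b := fun f a b =>
    (hre f).intervalIntegrable a b
  -- uniform bound on evaluation functionals, via Banach–Steinhaus,
  -- and the resulting integral bound
  have hb : ∀ b : ℝ≥0, ∃ C : ℝ, 0 ≤ C ∧ ∀ (x y : ℝ≥0), x ≤ b → y ≤ b → ∀ f : H,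
      ‖∫ s in (x:ℝ)..(y:ℝ), ι f s.toNNReal‖ ≤ C * ‖f‖ * |(y:ℝ) - (x:ℝ)| := by
    intro b
    have hbs : ∃ C' : ℝ, ∀ i : {s : ℝ≥0 // s ≤ b}, ‖E i.1‖ ≤ C' := by
      apply banach_steinhaus
      intro f
      obtain ⟨C, hC⟩ := (isCompact_Icc : IsCompact (Set.Icc (0:ℝ≥0) b)).exists_bound_of_continuousOn
        (Continuous.continuousOn (hcont f))
      exact ⟨C, fun i => by
        simpa only [hEapp] using hC i.1 ⟨zero_le, i.2⟩⟩
    obtain ⟨C', hC'⟩ := hbs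
    refine ⟨max C' 0, le_max_right _ _, ?_⟩
    intro x y hx hy f
    have key : ∀ s ∈ Set.uIoc (x:ℝ) (y:ℝ), ‖(ι f s.toNNReal : ℝ)‖ ≤ max C' 0 * ‖f‖ := by
      intro s hs
      have hsb : s.toNNReal ≤ b := by
        rw [Real.toNNReal_le_iff_le_coe]
        refine le_trans hs.2 ?_
        exact max_le (by exact_mod_cast hx) (by exact_mod_cast hy)
      calc ‖(ι f s.toNNReal : ℝ)‖ = ‖E s.toNNReal f‖ := by rw [hEapp]
        _ ≤ ‖E s.toNNReal‖ * ‖f‖ := (E s.toNNReal).le_opNorm f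
        _ ≤ max C' 0 * ‖f‖ := by
            apply mul_le_mul_of_nonneg_right _ (norm_nonneg f)
            exact le_trans (hC' ⟨s.toNNReal, hsb⟩) (le_max_left _ _)
    simpa [mul_comm] using intervalIntegral.norm_integral_le_of_norm_le_const key
  refine ⟨?_, ?_, ?_⟩
  · -- (a)
    intro x
    obtain ⟨C, hC0, hC⟩ := hb x
    refine ⟨LinearMap.mkContinuous
      { toFun := fun f : H => ∫ s in (0:ℝ)..(x:ℝ), ι f s.toNNReal
        map_add' := by
          intro f g
          rw [← intervalIntegral.integral_add (hint f 0 x) (hint g 0 x)]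
          exact intervalIntegral.integral_congr fun s _ => by simp
        map_smul' := by
          intro c f
          rw [RingHom.id_apply, ← intervalIntegral.integral_smul]
          exact intervalIntegral.integral_congr fun s _ => by simp }
      (C * x) ?_, fun f => rfl⟩
    intro f
    have := hC 0 x zero_le le_rfl f
    simp only [NNReal.coe_zero, sub_zero] at this
    calc ‖∫ s in (0:ℝ)..(x:ℝ), ι f s.toNNReal‖ ≤ C * ‖f‖ * |(x:ℝ)| := this
      _ = C * (x:ℝ) * ‖f‖ := by
          rw [abs_of_nonneg x.coe_nonneg]; ring
  · -- (b)
    intro f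
    refine ⟨?_, hcont f⟩
    intro x hx
    exact (intervalIntegral.integral_hasDerivAt_right (hint f 0 x)
      (hre f).aestronglyMeasurable.stronglyMeasurableAtFilter
      (hre f).continuousAt).hasDerivWithinAt
  · -- (c)
    rw [continuous_iff_continuousAt]
    rintro ⟨x₀, f₀⟩
    obtain ⟨C, hC0, hC⟩ := hb (x₀ + 1)
    rw [ContinuousAt, tendsto_iff_norm_sub_tendsto_zero]
    apply squeeze_zero_norm'
      (a := fun p : ℝ≥0 × H =>
        C * ((x₀:ℝ) + 1) * ‖p.2 - f₀‖ + C * ‖f₀‖ * |(p.1:ℝ) - (x₀:ℝ)|)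
    · have hev : ∀ᶠ p : ℝ≥0 × H in 𝓝 (x₀, f₀), p.1 ≤ x₀ + 1 := by
        have : ∀ᶠ z : ℝ≥0 in 𝓝 x₀, z < x₀ + 1 := eventually_lt_nhds (lt_add_one x₀)
        exact ((continuous_fst.tendsto (x₀, f₀)).eventually this).mono fun p hp => hp.le
      filter_upwards [hev] with p hp
      have hdecomp :
          (∫ s in (0:ℝ)..(p.1:ℝ), ι p.2 s.toNNReal) - ∫ s in (0:ℝ)..(x₀:ℝ), ι f₀ s.toNNReal
          = (∫ s in (0:ℝ)..(p.1:ℝ), ι (p.2 - f₀) s.toNNReal)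
            + ∫ s in (x₀:ℝ)..(p.1:ℝ), ι f₀ s.toNNReal := by
        have h1 : (∫ s in (0:ℝ)..(p.1:ℝ), ι (p.2 - f₀) s.toNNReal)
            = (∫ s in (0:ℝ)..(p.1:ℝ), ι p.2 s.toNNReal)
              - ∫ s in (0:ℝ)..(p.1:ℝ), ι f₀ s.toNNReal := by
          rw [← intervalIntegral.integral_sub (hint p.2 0 p.1) (hint f₀ 0 p.1)]
          exact intervalIntegral.integral_congr fun s _ => by simp
        have h2 : (∫ s in (0:ℝ)..(p.1:ℝ), ι f₀ s.toNNReal)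
            - (∫ s in (0:ℝ)..(x₀:ℝ), ι f₀ s.toNNReal)
            = ∫ s in (x₀:ℝ)..(p.1:ℝ), ι f₀ s.toNNReal :=
          intervalIntegral.integral_interval_sub_left (hint f₀ 0 p.1) (hint f₀ 0 x₀)
        rw [h1, ← h2]
        ring
      rw [norm_norm, hdecomp]
      refine le_trans (norm_add_le _ _) (add_le_add ?_ ?_)
      · have := hC 0 p.1 zero_le hp (p.2 - f₀)
        simp only [NNReal.coe_zero, sub_zero] at this
        refine le_trans this ?_
        rw [abs_of_nonneg p.1.coe_nonneg]
        have h1 : (p.1 : ℝ) ≤ (x₀:ℝ) + 1 := by exact_mod_cast hp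
        have h2 : 0 ≤ C * ‖p.2 - f₀‖ := mul_nonneg hC0 (norm_nonneg _)
        calc C * ‖p.2 - f₀‖ * (p.1:ℝ) ≤ C * ‖p.2 - f₀‖ * ((x₀:ℝ) + 1) :=
              mul_le_mul_of_nonneg_left h1 h2
          _ = C * ((x₀:ℝ) + 1) * ‖p.2 - f₀‖ := by ring
      · exact hC x₀ p.1 (le_add_of_nonneg_right zero_le_one) hp f₀
    · have hcg : Continuous fun p : ℝ≥0 × H =>
          C * ((x₀:ℝ) + 1) * ‖p.2 - f₀‖ + C * ‖f₀‖ * |(p.1:ℝ) - (x₀:ℝ)| := by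
        fun_prop
      have := hcg.tendsto (x₀, f₀)
      simpa using this
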